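/- Let BP_n be the n-dimensional burnt pancake network with n ≥ 3. If U is a subset of V(BP_n) with 2 ≤ |U| ≤ 4n − 8, then |N_{BP_n}(U)| ≥ 2n − 2. -/

import Mathlib

open SimpleGraph

/-- The neighborhood of a vertex set `U` in `G`: all vertices outside `U`
adjacent to at least one vertex of `U`. -/
def setNbhd {V : Type*} (G : SimpleGraph V) (U : Set V) : Set V :=
  {v | v ∉ U ∧ ∃ u ∈ U, G.Adj u v}

/-- The permutation of positions `{0,…,n−1}` reversing the first `i+1` positions
(those `j` with `j ≤ i`) and fixing the rest. -/
def revPerm (n : ℕ) (i : Fin n) : Equiv.Perm (Fin n) :=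
  Function.Involutive.toPerm
    (fun j => if j.val ≤ i.val then ⟨i.val - j.val, Nat.lt_of_le_of_lt (Nat.sub_le _ _) i.isLt⟩ else j)
    (by
      intro j
      dsimp only
      by_cases h : j.val ≤ i.val
      · rw [if_pos h, if_pos (by simp [Nat.sub_le])]
        exact Fin.ext (by simp; omega)
      · rw [if_neg h, if_neg h])

/-- A vertex of the burnt pancake network: a signed permutation of `{1,…,n}`, encoded as a
pair `(π, ε)` where `π j` is the symbol at position `j` and `ε j` is its sign. The `i`-th
prefix reversal (here `i : Fin n` reverses the first `i+1` entries) reverses the order of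
the first `i+1` entries and negates each of them. -/
def prefixReversal {n : ℕ} (i : Fin n) (u : Equiv.Perm (Fin n) × (Fin n → Bool)) :
    Equiv.Perm (Fin n) × (Fin n → Bool) :=
  (u.1 * revPerm n i, fun j => if j.val ≤ i.val then !(u.2 (revPerm n i j)) else u.2 j)

/-- The `n`-dimensional burnt pancake network `BP_n`: vertices are the signed permutations
of `{1,…,n}`, with `u` and `v` adjacent iff `v` is obtained from `u` by a prefix
reversal. -/
def burntPancake (n : ℕ) : SimpleGraph (Equiv.Perm (Fin n) × (Fin n → Bool)) :=
  SimpleGraph.fromRel (fun u v => ∃ i : Fin n, v = prefixReversal i u)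

namespace BP

variable {n : ℕ}

abbrev Vtx (n : ℕ) := Equiv.Perm (Fin n) × (Fin n → Bool)

lemma revPerm_val (i j : Fin n) :
    (revPerm n i j).val = if j.val ≤ i.val then i.val - j.val else j.val := by
  show (if j.val ≤ i.val then (⟨i.val - j.val, Nat.lt_of_le_of_lt (Nat.sub_le _ _) i.isLt⟩ : Fin n) else j).val = _
  split <;> rfl

lemma pr_fst (i : Fin n) (u : Vtx n) (j : Fin n) :
    (prefixReversal i u).1 j = u.1 (revPerm n i j) := rfl

lemma pr_snd (i : Fin n) (u : Vtx n) (j : Fin n) :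
    (prefixReversal i u).2 j = if j.val ≤ i.val then !(u.2 (revPerm n i j)) else u.2 j := rfl

lemma revPerm_revPerm (i j : Fin n) : revPerm n i (revPerm n i j) = j := by
  apply Fin.ext
  simp only [revPerm_val]
  split_ifs <;> omega

lemma pr_pr (i : Fin n) (u : Vtx n) : prefixReversal i (prefixReversal i u) = u := by
  apply Prod.ext
  · apply Equiv.ext
    intro j
    show ((prefixReversal i (prefixReversal i u)).1) j = u.1 j
    rw [pr_fst, pr_fst, revPerm_revPerm]
  · funext j
    show (prefixReversal i (prefixReversal i u)).2 j = u.2 j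
    by_cases h : j.val ≤ i.val
    · have h2 : (revPerm n i j).val ≤ i.val := by rw [revPerm_val]; split_ifs <;> omega
      rw [pr_snd, if_pos h, pr_snd, if_pos h2, revPerm_revPerm, Bool.not_not]
    · rw [pr_snd, if_neg h, pr_snd, if_neg h]

lemma adj_iff {u v : Vtx n} :
    (burntPancake n).Adj u v ↔ u ≠ v ∧ ∃ i, v = prefixReversal i u := by
  show (u ≠ v ∧ _) ↔ _
  constructor
  · rintro ⟨hne, (⟨i, rfl⟩ | ⟨i, h⟩)⟩
    · exact ⟨hne, i, rfl⟩
    · exact ⟨hne, i, by rw [h, pr_pr]⟩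
  · rintro ⟨hne, i, rfl⟩
    exact ⟨hne, Or.inl ⟨i, rfl⟩⟩

lemma revPerm_zero (i : Fin n) (h : 0 < n) : revPerm n i ⟨0, h⟩ = i := by
  apply Fin.ext; rw [revPerm_val]; simp

lemma pr_ne_self (i : Fin n) (u : Vtx n) : prefixReversal i u ≠ u := by
  intro h
  by_cases hi : i.val = 0
  · have h2 := congrFun (congrArg Prod.snd h) i
    rw [pr_snd, if_pos (by omega)] at h2
    have : revPerm n i i = i := by apply Fin.ext; rw [revPerm_val]; split_ifs <;> omega
    rw [this] at h2
    simp at h2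
  · have hn0 : 0 < n := i.pos
    have h1 := congrArg (fun (p : Vtx n) => p.1 ⟨0, hn0⟩) h
    simp only [pr_fst] at h1
    rw [revPerm_zero i hn0] at h1
    have := u.1.injective h1
    exact hi (by simpa using congrArg Fin.val this)

lemma pr_index_inj {i j : Fin n} {u : Vtx n} (h : prefixReversal i u = prefixReversal j u) : i = j := by
  have hn0 : 0 < n := i.pos
  have h1 := congrArg (fun (p : Vtx n) => p.1 ⟨0, hn0⟩) h
  simp only [pr_fst] at h1
  rw [revPerm_zero i hn0, revPerm_zero j hn0] at h1
  exact u.1.injective h1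

lemma adj_pr (i : Fin n) (u : Vtx n) : (burntPancake n).Adj u (prefixReversal i u) :=
  adj_iff.2 ⟨(pr_ne_self i u).symm, i, rfl⟩

/-- natural-number model of `revPerm` -/
def rr (a m : ℕ) : ℕ := if m ≤ a then a - m else m

lemma ext_core {n i j k l : ℕ} (hi : i < n) (hj : j < n) (hk : k < n) (hl : l < n)
    (hij : i ≠ j) (hkl : k ≠ l)
    (hP : ∀ m, m < n → rr i (rr j m) = rr k (rr l m))
    (hD : ∀ m, m < n →
      (((m ≤ j ∧ i < j - m) ∨ (j < m ∧ m ≤ i)) ↔ ((m ≤ l ∧ k < l - m) ∨ (l < m ∧ m ≤ k)))) :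
    i = k ∧ j = l := by
  rcases lt_or_gt_of_ne hij with h1 | h1 <;> rcases lt_or_gt_of_ne hkl with h2 | h2
  · have hjl : j = l := by
      rcases lt_trichotomy j l with h | h | h
      · have hp := hP l hl
        simp only [rr] at hp
        split_ifs at hp <;> omega
      · exact h
      · have hp := hP j hj
        simp only [rr] at hp
        split_ifs at hp <;> omega
    subst hjl
    refine ⟨?_, rfl⟩
    rcases lt_trichotomy i k with h | h | h
    · have hd := hD (j - k) (by omega)
      omega
    · exact h
    · have hd := hD (j - i) (by omega)
      omega
  · have hd := hD 0 (by omega); omega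
  · have hd := hD 0 (by omega); omega
  · have hd1 := hD i hi
    have hd2 := hD k hk
    have hd3 := hD (j+1) (by omega)
    have hd4 := hD (l+1) (by omega)
    constructor <;> omega

lemma ext_core2 {n i j k : ℕ} (hi : i < n) (hj : j < n) (hk : k < n) (hij : i ≠ j)
    (hP : ∀ m, m < n → rr i (rr j m) = rr k m)
    (hD : ∀ m, m < n → (((m ≤ j ∧ i < j - m) ∨ (j < m ∧ m ≤ i)) ↔ m ≤ k)) : False := by
  have h0 := hD 0 (by omega)
  have hdj := hD j hj
  have hp := hP j hj
  simp only [rr] at hp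
  split_ifs at hp <;> omega

lemma revPerm_val_rr (i j : Fin n) : (revPerm n i j).val = rr i.val j.val := revPerm_val i j

lemma xor_cancel {a x y : Bool} (h : xor a x = xor a y) : x = y := by
  revert h; cases a <;> cases x <;> cases y <;> decide

lemma revPerm_eq_self_of_gt {i x : Fin n} (h : i.val < x.val) : revPerm n i x = x := by
  apply Fin.ext; rw [revPerm_val, if_neg (by omega)]

/-- composite sign formula -/
lemma pr_pr_snd (i j : Fin n) (u : Vtx n) (m : Fin n) :
    (prefixReversal j (prefixReversal i u)).2 m =
      xor (u.2 (revPerm n i (revPerm n j m)))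
        (decide ((m.val ≤ j.val ∧ i.val < j.val - m.val) ∨ (j.val < m.val ∧ m.val ≤ i.val))) := by
  by_cases h1 : m.val ≤ j.val
  · have hv : (revPerm n j m).val = j.val - m.val := by rw [revPerm_val, if_pos h1]
    by_cases h2 : j.val - m.val ≤ i.val
    · rw [pr_snd, if_pos h1, pr_snd, if_pos (by omega : (revPerm n j m).val ≤ i.val)]
      have : decide ((m.val ≤ j.val ∧ i.val < j.val - m.val) ∨ (j.val < m.val ∧ m.val ≤ i.val)) = false := by
        simp only [decide_eq_false_iff_not]; omega
      rw [this, Bool.xor_false, Bool.not_not]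
    · rw [pr_snd, if_pos h1, pr_snd, if_neg (by omega : ¬ (revPerm n j m).val ≤ i.val)]
      rw [revPerm_eq_self_of_gt (by omega : i.val < (revPerm n j m).val)]
      have : decide ((m.val ≤ j.val ∧ i.val < j.val - m.val) ∨ (j.val < m.val ∧ m.val ≤ i.val)) = true := by
        simp only [decide_eq_true_eq]; omega
      rw [this, Bool.xor_true]
  · have hrj : revPerm n j m = m := revPerm_eq_self_of_gt (by omega)
    rw [pr_snd, if_neg h1, hrj]
    by_cases h2 : m.val ≤ i.val
    · rw [pr_snd, if_pos h2]
      have : decide ((m.val ≤ j.val ∧ i.val < j.val - m.val) ∨ (j.val < m.val ∧ m.val ≤ i.val)) = true := by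
        simp only [decide_eq_true_eq]; omega
      rw [this, Bool.xor_true]
    · rw [pr_snd, if_neg h2, revPerm_eq_self_of_gt (by omega : i.val < m.val)]
      have : decide ((m.val ≤ j.val ∧ i.val < j.val - m.val) ∨ (j.val < m.val ∧ m.val ≤ i.val)) = false := by
        simp only [decide_eq_false_iff_not]; omega
      rw [this, Bool.xor_false]

/-- single sign formula, uniform version -/
lemma pr_snd_xor (k : Fin n) (u : Vtx n) (m : Fin n) :
    (prefixReversal k u).2 m = xor (u.2 (revPerm n k m)) (decide (m.val ≤ k.val)) := by
  by_cases h : m.val ≤ k.val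
  · rw [pr_snd, if_pos h]
    simp [h]
  · rw [pr_snd, if_neg h, revPerm_eq_self_of_gt (by omega : k.val < m.val)]
    simp [h]

lemma eq_pr_pr_extract {u : Vtx n} {i j k l : Fin n} (hij : i ≠ j) (hkl : k ≠ l)
    (heq : prefixReversal j (prefixReversal i u) = prefixReversal l (prefixReversal k u)) :
    i = k ∧ j = l := by
  have hP : ∀ m : Fin n, revPerm n i (revPerm n j m) = revPerm n k (revPerm n l m) := by
    intro m
    have h := congrArg (fun p : Vtx n => p.1 m) heq
    simp only [pr_fst] at h
    exact u.1.injective h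
  have hD : ∀ m : Fin n,
      ((m.val ≤ j.val ∧ i.val < j.val - m.val) ∨ (j.val < m.val ∧ m.val ≤ i.val)) ↔
      ((m.val ≤ l.val ∧ k.val < l.val - m.val) ∨ (l.val < m.val ∧ m.val ≤ k.val)) := by
    intro m
    have h := congrFun (congrArg Prod.snd heq) m
    rw [pr_pr_snd, pr_pr_snd, hP m] at h
    exact decide_eq_decide.mp (xor_cancel h)
  have hres : i.val = k.val ∧ j.val = l.val := by
    apply ext_core i.isLt j.isLt k.isLt l.isLt
      (fun h => hij (Fin.ext h)) (fun h => hkl (Fin.ext h))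
    · intro m hm
      have := congrArg Fin.val (hP ⟨m, hm⟩)
      simpa only [revPerm_val_rr] using this
    · intro m hm
      exact hD ⟨m, hm⟩
  exact ⟨Fin.ext hres.1, Fin.ext hres.2⟩

lemma eq_pr_pr_single {u : Vtx n} {i j k : Fin n} (hij : i ≠ j)
    (heq : prefixReversal j (prefixReversal i u) = prefixReversal k u) : False := by
  have hP : ∀ m : Fin n, revPerm n i (revPerm n j m) = revPerm n k m := by
    intro m
    have h := congrArg (fun p : Vtx n => p.1 m) heq
    simp only [pr_fst] at h
    exact u.1.injective h
  have hD : ∀ m : Fin n,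
      ((m.val ≤ j.val ∧ i.val < j.val - m.val) ∨ (j.val < m.val ∧ m.val ≤ i.val)) ↔
      m.val ≤ k.val := by
    intro m
    have h := congrFun (congrArg Prod.snd heq) m
    rw [pr_pr_snd, pr_snd_xor, hP m] at h
    exact decide_eq_decide.mp (xor_cancel h)
  apply ext_core2 i.isLt j.isLt k.isLt (fun h => hij (Fin.ext h))
  · intro m hm
    have := congrArg Fin.val (hP ⟨m, hm⟩)
    simpa only [revPerm_val_rr] using this
  · intro m hm
    exact hD ⟨m, hm⟩

/-- any two distinct vertices have at most one common neighbour -/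
lemma common_nbr_unique {u v w1 w2 : Vtx n} (huv : u ≠ v)
    (h1 : (burntPancake n).Adj u w1) (h2 : (burntPancake n).Adj v w1)
    (h3 : (burntPancake n).Adj u w2) (h4 : (burntPancake n).Adj v w2) : w1 = w2 := by
  obtain ⟨-, i, hiu⟩ := adj_iff.1 h1
  obtain ⟨-, j, hj⟩ := adj_iff.1 h2
  obtain ⟨-, k, hku⟩ := adj_iff.1 h3
  obtain ⟨-, l, hl⟩ := adj_iff.1 h4
  have hv1 : v = prefixReversal j (prefixReversal i u) := by
    rw [← hiu, hj, pr_pr]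
  have hv2 : v = prefixReversal l (prefixReversal k u) := by
    rw [← hku, hl, pr_pr]
  have hij : i ≠ j := by
    rintro rfl
    rw [pr_pr] at hv1
    exact huv hv1.symm
  have hkl : k ≠ l := by
    rintro rfl
    rw [pr_pr] at hv2
    exact huv hv2.symm
  obtain ⟨hik, -⟩ := eq_pr_pr_extract hij hkl (hv1.symm.trans hv2)
  rw [hiu, hku, hik]

/-- triangle-free -/
lemma no_triangle {u v w : Vtx n} (h1 : (burntPancake n).Adj u v)
    (h2 : (burntPancake n).Adj u w) (h3 : (burntPancake n).Adj v w) : False := by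
  obtain ⟨-, k, hk⟩ := adj_iff.1 h1
  obtain ⟨-, a, ha⟩ := adj_iff.1 h2
  obtain ⟨-, b, hb⟩ := adj_iff.1 h3
  have hv : v = prefixReversal b (prefixReversal a u) := by
    rw [← ha, hb, pr_pr]
  have hab : a ≠ b := by
    rintro rfl
    rw [pr_pr] at hv
    exact h1.ne hv.symm
  exact eq_pr_pr_single hab (hv.symm.trans hk)


/-! ### tail classes -/

def tailCls (k : ℕ) (u : Vtx n) : Set (Vtx n) :=
  {v | ∀ j : Fin n, k ≤ j.val → u.1 j = v.1 j ∧ u.2 j = v.2 j}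

lemma tailCls_self (k : ℕ) (u : Vtx n) : u ∈ tailCls k u := fun _ _ => ⟨rfl, rfl⟩

lemma tailCls_symm {k : ℕ} {u v : Vtx n} (h : v ∈ tailCls k u) : u ∈ tailCls k v :=
  fun j hj => ⟨(h j hj).1.symm, (h j hj).2.symm⟩

lemma tailCls_trans {k : ℕ} {u v w : Vtx n} (h1 : v ∈ tailCls k u) (h2 : w ∈ tailCls k v) :
    w ∈ tailCls k u :=
  fun j hj => ⟨(h1 j hj).1.trans (h2 j hj).1, (h1 j hj).2.trans (h2 j hj).2⟩

lemma tailCls_eq_of_mem {k : ℕ} {u v : Vtx n} (h : v ∈ tailCls k u) :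
    tailCls k u = tailCls k v := by
  ext w
  exact ⟨fun hw => tailCls_trans (tailCls_symm h) hw, fun hw => tailCls_trans h hw⟩

lemma tailCls_mono {j k : ℕ} (hjk : j ≤ k) (u : Vtx n) : tailCls j u ⊆ tailCls k u :=
  fun _ hv i hi => hv i (le_trans hjk hi)

lemma pr_mem_tailCls_iff {k : ℕ} (hk1 : 1 ≤ k) (i : Fin n) (u : Vtx n) :
    prefixReversal i u ∈ tailCls k u ↔ i.val < k := by
  constructor
  · intro h
    by_contra hik
    push_neg at hik
    have h2 := (h i hik).1
    rw [pr_fst] at h2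
    have hz : revPerm n i i = ⟨0, i.pos⟩ := by
      apply Fin.ext
      rw [revPerm_val, if_pos le_rfl]
      simp
    rw [hz] at h2
    have := u.1.injective h2
    have : i.val = 0 := by simpa using congrArg Fin.val this
    omega
  · intro hik j hj
    have hgt : i.val < j.val := by omega
    constructor
    · rw [pr_fst, revPerm_eq_self_of_gt hgt]
    · rw [pr_snd, if_neg (by omega)]

lemma nbrs_in_tailCls {k : ℕ} (hk1 : 1 ≤ k) (u : Vtx n) :
    {v | (burntPancake n).Adj u v ∧ v ∈ tailCls k u} =
      (fun i : Fin n => prefixReversal i u) '' {i : Fin n | i.val < k} := by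
  ext v
  constructor
  · rintro ⟨hadj, hmem⟩
    obtain ⟨-, i, rfl⟩ := adj_iff.1 hadj
    exact ⟨i, (pr_mem_tailCls_iff hk1 i u).1 hmem, rfl⟩
  · rintro ⟨i, hi, rfl⟩
    exact ⟨adj_pr i u, (pr_mem_tailCls_iff hk1 i u).2 hi⟩

lemma ncard_index_set {k : ℕ} (hkn : k ≤ n) : ({i : Fin n | i.val < k} : Set (Fin n)).ncard = k := by
  have : ({i : Fin n | i.val < k} : Set (Fin n)) = Set.range (Fin.castLE hkn) := by
    ext j
    constructor
    · intro hj
      exact ⟨⟨j.val, hj⟩, rfl⟩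
    · rintro ⟨a, rfl⟩
      exact a.isLt
  rw [this, ← Set.image_univ, Set.ncard_image_of_injective _ (Fin.castLE_injective hkn),
    Set.ncard_univ]
  simp

lemma ncard_pr_image {k : ℕ} (hkn : k ≤ n) (u : Vtx n) :
    ((fun i : Fin n => prefixReversal i u) '' {i : Fin n | i.val < k}).ncard = k := by
  rw [Set.ncard_image_of_injective _ (fun a b h => pr_index_inj h), ncard_index_set hkn]


end BP

namespace BPCount


lemma nat_offdiag_helper (a : ℕ) : a * (a - 1) = a * a - a := by
  cases a with
  | zero => simp
  | succ b =>
    have h : (b+1)*(b+1) = (b+1)*b + (b+1) := by ring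
    simp only [Nat.succ_sub_one]
    omega

lemma two_mul_le_helper (t : ℕ) : 2 * t ≤ 2 + t * (t - 1) := by
  rcases t with _ | _ | t
  · omega
  · omega
  · have h0 : t + 2 - 1 = t + 1 := rfl
    rw [h0]
    nlinarith

lemma sum_bon {α : Type*} (s : Finset α) (f : α → ℕ) :
    2 * (∑ x ∈ s, f x) ≤ 2 * s.card + ∑ x ∈ s, f x * (f x - 1) := by
  rw [Finset.mul_sum]
  have : 2 * s.card = ∑ _x ∈ s, 2 := by rw [Finset.sum_const, smul_eq_mul, mul_comm]
  rw [this, ← Finset.sum_add_distrib]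
  apply Finset.sum_le_sum
  intro x _
  exact two_mul_le_helper (f x)

variable {V : Type*} [Fintype V] [DecidableEq V]

lemma count_main (G : SimpleGraph V) [DecidableRel G.Adj]
    (hCN : ∀ {u v w1 w2 : V}, u ≠ v → G.Adj u w1 → G.Adj v w1 → G.Adj u w2 → G.Adj v w2 → w1 = w2)
    (hTF : ∀ {u v w : V}, G.Adj u v → G.Adj u w → G.Adj v w → False)
    (S U : Finset V) (hUS : U ⊆ S) (k : ℕ)
    (hdeg : ∀ u ∈ U, (S.filter (G.Adj u)).card = k) :
    2 * k * U.card + (∑ u ∈ U, (U.filter (G.Adj u)).card * ((U.filter (G.Adj u)).card - 1))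
      + U.card
    ≤ 2 * ((U.biUnion (fun u => S.filter (G.Adj u)) \ U).card)
      + (∑ u ∈ U, (U.filter (G.Adj u)).card) + U.card * U.card
    ∧ (∑ u ∈ U, (U.filter (G.Adj u)).card) ≤ U.card * (U.card - 1)
    ∧ 2 * (∑ u ∈ U, (U.filter (G.Adj u)).card)
      ≤ 2 * U.card + (∑ u ∈ U, (U.filter (G.Adj u)).card * ((U.filter (G.Adj u)).card - 1)) := by
  classical
  refine ⟨?_, ?_, ?_⟩
  case refine_2 =>
    have hd_le : ∀ u ∈ U, (U.filter (G.Adj u)).card ≤ U.card - 1 := by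
      intro u hu
      have hsub2 : U.filter (G.Adj u) ⊆ U.erase u := by
        intro v hv
        rw [Finset.mem_filter] at hv
        exact Finset.mem_erase.2 ⟨hv.2.ne', hv.1⟩
      calc (U.filter (G.Adj u)).card ≤ (U.erase u).card := Finset.card_le_card hsub2
      _ = U.card - 1 := Finset.card_erase_of_mem hu
    calc ∑ u ∈ U, (U.filter (G.Adj u)).card ≤ ∑ _u ∈ U, (U.card - 1) :=
      Finset.sum_le_sum hd_le
    _ = U.card * (U.card - 1) := by rw [Finset.sum_const, smul_eq_mul]
  case refine_3 => exact sum_bon U _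
  case refine_1 => ?_
  set W : Finset V := U.biUnion (fun u => S.filter (G.Adj u)) \ U with hW
  set d : V → ℕ := fun u => (U.filter (G.Adj u)).card with hd
  set t : V → ℕ := fun w => (U.filter (fun u => G.Adj u w)).card with ht
  have hA : ∀ u ∈ U, W.filter (fun w => G.Adj u w) = (S.filter (G.Adj u)) \ U := by
    intro u hu
    ext w
    simp only [Finset.mem_filter, Finset.mem_sdiff, Finset.mem_biUnion, hW]
    constructor
    · rintro ⟨⟨⟨x, hx, hxw⟩, hwU⟩, hadj⟩
      exact ⟨⟨hxw.1, hadj⟩, hwU⟩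
    · rintro ⟨⟨hwS, hadj⟩, hwU⟩
      exact ⟨⟨⟨u, hu, ⟨hwS, hadj⟩⟩, hwU⟩, hadj⟩
  have hsub : ∀ u : V, U.filter (G.Adj u) ⊆ S.filter (G.Adj u) := by
    intro u w hw
    simp only [Finset.mem_filter] at hw ⊢
    exact ⟨hUS hw.1, hw.2⟩
  have hdk : ∀ u ∈ U, d u ≤ k := by
    intro u hu
    rw [← hdeg u hu, hd]
    exact Finset.card_le_card (hsub u)
  have hAcard : ∀ u ∈ U, (W.filter (fun w => G.Adj u w)).card = k - d u := by
    intro u hu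
    rw [hA u hu]
    have h2 : (S.filter (G.Adj u)) \ U = (S.filter (G.Adj u)) \ (U.filter (G.Adj u)) := by
      ext w
      simp only [Finset.mem_sdiff, Finset.mem_filter]
      tauto
    rw [h2, Finset.card_sdiff_of_subset (hsub u), hdeg u hu]
  -- Σ_u |A u| = Σ_w t w
  have hsum1 : ∑ u ∈ U, (W.filter (fun w => G.Adj u w)).card = ∑ w ∈ W, t w := by
    have lhs : ∀ u, (W.filter (fun w => G.Adj u w)).card
        = ∑ w ∈ W, (if G.Adj u w then 1 else 0) := by
      intro u; rw [Finset.card_filter]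
    have rhs : ∀ w, t w = ∑ u ∈ U, (if G.Adj u w then 1 else 0) := by
      intro w; exact Finset.card_filter _ _
    simp only [lhs, rhs]
    exact Finset.sum_comm
  -- Σ_w t w ≥ k*|U| - Σ d  (in additive form)
  have hsum2 : k * U.card ≤ (∑ w ∈ W, t w) + ∑ u ∈ U, d u := by
    rw [← hsum1, ← Finset.sum_add_distrib]
    calc k * U.card = ∑ _u ∈ U, k := by rw [Finset.sum_const, smul_eq_mul, mul_comm]
    _ ≤ ∑ u ∈ U, ((W.filter (fun w => G.Adj u w)).card + d u) := by
        apply Finset.sum_le_sum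
        intro u hu
        rw [hAcard u hu]
        have := hdk u hu
        omega
  -- pair sets
  set Dset : Finset (V × V) := U.offDiag.filter (fun p => G.Adj p.1 p.2) with hDset
  set Iset : Finset (V × V) := U.offDiag.filter
      (fun p => ¬ G.Adj p.1 p.2 ∧ ∃ x ∈ U, G.Adj p.1 x ∧ G.Adj p.2 x) with hIset
  set Bset : Finset (V × V) := U.offDiag.filter
      (fun p => ¬ G.Adj p.1 p.2 ∧ ∀ x ∈ U, ¬ (G.Adj p.1 x ∧ G.Adj p.2 x)) with hBset
  -- Σ_w t(t-1) ≤ |Bset|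
  have hsum3 : ∑ w ∈ W, t w * (t w - 1) ≤ Bset.card := by
    have hcard : ∑ w ∈ W, t w * (t w - 1)
        = (W.sigma (fun w => (U.filter (fun u => G.Adj u w)).offDiag)).card := by
      rw [Finset.card_sigma]
      apply Finset.sum_congr rfl
      intro w _
      rw [Finset.offDiag_card, ← nat_offdiag_helper]
    rw [hcard]
    apply Finset.card_le_card_of_injOn (fun x => x.2)
    · rintro ⟨w, u, v⟩ hx
      simp only [Finset.mem_coe, Finset.mem_sigma, Finset.mem_offDiag, Finset.mem_filter] at hx
      obtain ⟨hwW, ⟨⟨huU, hadju⟩, ⟨hvU, hadjv⟩, huv⟩⟩ := hx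
      have hwnU : w ∉ U := (Finset.mem_sdiff.1 hwW).2
      simp only [hBset, Finset.mem_coe, Finset.mem_filter, Finset.mem_offDiag]
      refine ⟨⟨huU, hvU, huv⟩, ?_, ?_⟩
      · intro hadj
        exact hTF hadj hadju hadjv
      · intro x hxU ⟨hx1, hx2⟩
        have : w = x := hCN huv hadju hadjv hx1 hx2
        exact hwnU (this ▸ hxU)
    · rintro ⟨w1, u1, v1⟩ hx1 ⟨w2, u2, v2⟩ hx2 heq
      have heq' : (u1, v1) = (u2, v2) := heq
      injection heq' with h1' h2'
      subst h1'; subst h2'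
      obtain ⟨-, hp1⟩ := Finset.mem_sigma.1 hx1
      obtain ⟨-, hp2⟩ := Finset.mem_sigma.1 hx2
      obtain ⟨hu1, hv1, huv⟩ := Finset.mem_offDiag.1 hp1
      obtain ⟨hu2, hv2, -⟩ := Finset.mem_offDiag.1 hp2
      have : w1 = w2 := hCN huv (Finset.mem_filter.1 hu1).2 (Finset.mem_filter.1 hv1).2
        (Finset.mem_filter.1 hu2).2 (Finset.mem_filter.1 hv2).2
      subst this
      rfl
  -- Σ_u d(d-1) ≤ |Iset|
  have hsum4 : ∑ u ∈ U, d u * (d u - 1) ≤ Iset.card := by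
    have hcard : ∑ u ∈ U, d u * (d u - 1)
        = (U.sigma (fun x => (U.filter (G.Adj x)).offDiag)).card := by
      rw [Finset.card_sigma]
      apply Finset.sum_congr rfl
      intro x _
      rw [Finset.offDiag_card, ← nat_offdiag_helper, hd]
    rw [hcard]
    apply Finset.card_le_card_of_injOn (fun x => x.2)
    · rintro ⟨x, u, v⟩ hx
      simp only [Finset.mem_coe, Finset.mem_sigma, Finset.mem_offDiag, Finset.mem_filter] at hx
      obtain ⟨hxU, ⟨⟨huU, hadju⟩, ⟨hvU, hadjv⟩, huv⟩⟩ := hx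
      simp only [hIset, Finset.mem_coe, Finset.mem_filter, Finset.mem_offDiag]
      refine ⟨⟨huU, hvU, huv⟩, ?_, ⟨x, hxU, hadju.symm, hadjv.symm⟩⟩
      intro hadj
      exact hTF hadj hadju.symm hadjv.symm
    · rintro ⟨x1, u1, v1⟩ hx1 ⟨x2, u2, v2⟩ hx2 heq
      have heq' : (u1, v1) = (u2, v2) := heq
      injection heq' with h1' h2'
      subst h1'; subst h2'
      obtain ⟨-, hp1⟩ := Finset.mem_sigma.1 hx1
      obtain ⟨-, hp2⟩ := Finset.mem_sigma.1 hx2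
      obtain ⟨hu1, hv1, huv⟩ := Finset.mem_offDiag.1 hp1
      obtain ⟨hu2, hv2, -⟩ := Finset.mem_offDiag.1 hp2
      have : x1 = x2 := hCN huv (Finset.mem_filter.1 hu1).2.symm (Finset.mem_filter.1 hv1).2.symm
        (Finset.mem_filter.1 hu2).2.symm (Finset.mem_filter.1 hv2).2.symm
      subst this
      rfl
  -- Σ_u d u ≤ |Dset|
  have hsum5 : ∑ u ∈ U, d u ≤ Dset.card := by
    have hcard : ∑ u ∈ U, d u = (U.sigma (fun x => U.filter (G.Adj x))).card := by
      rw [Finset.card_sigma]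
    rw [hcard]
    apply Finset.card_le_card_of_injOn (fun x => (x.1, x.2))
    · rintro ⟨x, u⟩ hx
      simp only [Finset.mem_coe, Finset.mem_sigma, Finset.mem_filter] at hx
      obtain ⟨hxU, huU, hadj⟩ := hx
      simp only [hDset, Finset.mem_coe, Finset.mem_filter, Finset.mem_offDiag]
      exact ⟨⟨hxU, huU, hadj.ne⟩, hadj⟩
    · rintro ⟨x1, u1⟩ hx1 ⟨x2, u2⟩ hx2 heq
      have heq' : (x1, u1) = (x2, u2) := heq
      injection heq' with h1' h2'
      subst h1'; subst h2'
      rfl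
  -- the three pair sets are disjoint subsets of offDiag
  have hdisj : Dset.card + Iset.card + Bset.card ≤ U.card * U.card - U.card := by
    have h1 : Disjoint Dset Iset := by
      rw [Finset.disjoint_left]
      intro p hp1 hp2
      simp only [hDset, hIset, Finset.mem_filter] at hp1 hp2
      exact hp2.2.1 hp1.2
    have h2 : Disjoint (Dset ∪ Iset) Bset := by
      rw [Finset.disjoint_left]
      intro p hp1 hp2
      simp only [hDset, hIset, hBset, Finset.mem_filter, Finset.mem_union] at hp1 hp2
      rcases hp1 with h | h
      · exact hp2.2.1 h.2
      · obtain ⟨x, hxU, hx⟩ := h.2.2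
        exact hp2.2.2 x hxU hx
    have h3 : (Dset ∪ Iset ∪ Bset) ⊆ U.offDiag := by
      intro p hp
      simp only [Finset.mem_union] at hp
      rcases hp with (h | h) | h <;>
        exact Finset.mem_of_mem_filter p h
    calc Dset.card + Iset.card + Bset.card
        = (Dset ∪ Iset ∪ Bset).card := by
          rw [Finset.card_union_of_disjoint h2, Finset.card_union_of_disjoint h1]
    _ ≤ U.offDiag.card := Finset.card_le_card h3
    _ = U.card * U.card - U.card := Finset.offDiag_card U
  -- pointwise Bonferroni
  have hbon : 2 * (∑ w ∈ W, t w) ≤ 2 * W.card + ∑ w ∈ W, t w * (t w - 1) :=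
    sum_bon W t
  -- assemble
  have e1 : ∑ u ∈ U, (U.filter (G.Adj u)).card = ∑ u ∈ U, d u := rfl
  have e2 : ∑ u ∈ U, (U.filter (G.Adj u)).card * ((U.filter (G.Adj u)).card - 1)
      = ∑ u ∈ U, d u * (d u - 1) := rfl
  have e3 : U.sum d = ∑ u ∈ U, d u := rfl
  have e4 : 2 * k * U.card = 2 * (k * U.card) := by ring
  have e5 : U.card ≤ U.card * U.card := by
    rcases Nat.eq_zero_or_pos U.card with h | h
    · simp [h]
    · exact Nat.le_mul_of_pos_left _ h
  omega


end BPCount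

namespace BP
variable {n : ℕ}

lemma base3 {n : ℕ} (hn : 3 ≤ n) (u0 : Vtx n) (U : Set (Vtx n))
    (hU : U ⊆ tailCls 3 u0) (h1 : 2 ≤ U.ncard) (h2 : U.ncard ≤ 4) :
    4 ≤ ((setNbhd (burntPancake n) U) ∩ tailCls 3 u0).ncard := by
  classical
  set G := burntPancake n with hG
  haveI hdec : DecidableRel G.Adj := Classical.decRel _
  have hUfin : U.Finite := Set.toFinite U
  have hSfin : (tailCls 3 u0).Finite := Set.toFinite _
  set Uf := hUfin.toFinset with hUf
  set Sf := hSfin.toFinset with hSf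
  have hUS : Uf ⊆ Sf := by
    intro x hx
    rw [hSf, Set.Finite.mem_toFinset]
    exact hU (by rwa [hUf, Set.Finite.mem_toFinset] at hx)
  have hdeg : ∀ u ∈ Uf, (Sf.filter (G.Adj u)).card = 3 := by
    intro u hu
    have huU : u ∈ U := by rwa [hUf, Set.Finite.mem_toFinset] at hu
    have hclass : tailCls 3 u0 = tailCls 3 u := tailCls_eq_of_mem (hU huU)
    have hcoe : ((Sf.filter (G.Adj u) : Finset (Vtx n)) : Set (Vtx n))
        = {v | G.Adj u v ∧ v ∈ tailCls 3 u} := by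
      rw [Finset.coe_filter]
      ext v
      simp only [Set.mem_setOf_eq, hSf, Set.Finite.mem_toFinset, hclass]
      tauto
    have hcc := congrArg Set.ncard hcoe
    rw [Set.ncard_coe_finset] at hcc
    rw [hcc, hG, nbrs_in_tailCls (by omega : 1 ≤ 3) u, ncard_pr_image (by omega : 3 ≤ n) u]
  obtain ⟨hmain, hD, hI⟩ := BPCount.count_main G
    (fun h a b c d => common_nbr_unique h a b c d)
    (fun a b c => no_triangle a b c) Sf Uf hUS 3 hdeg
  set W := Uf.biUnion (fun u => Sf.filter (G.Adj u)) \ Uf with hWdef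
  have hWset : ((W : Finset (Vtx n)) : Set (Vtx n)) = setNbhd G U ∩ tailCls 3 u0 := by
    ext v
    simp only [hWdef, Finset.coe_sdiff, Set.mem_diff, Finset.mem_coe, Finset.mem_biUnion,
      Finset.mem_filter, hUf, hSf, Set.Finite.mem_toFinset, setNbhd, Set.mem_inter_iff,
      Set.mem_setOf_eq]
    constructor
    · rintro ⟨⟨u, huU, hvS, hadj⟩, hvU⟩
      exact ⟨⟨hvU, u, huU, hadj⟩, hvS⟩
    · rintro ⟨⟨hvU, u, huU, hadj⟩, hvS⟩
      exact ⟨⟨u, huU, hvS, hadj⟩, hvU⟩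
  have htarget : (setNbhd G U ∩ tailCls 3 u0).ncard = W.card := by
    rw [← hWset, Set.ncard_coe_finset]
  rw [hG] at htarget
  rw [htarget]
  have hm : U.ncard = Uf.card := Set.ncard_eq_toFinset_card U hUfin
  have hcase : Uf.card = 2 ∨ Uf.card = 3 ∨ Uf.card = 4 := by omega
  rcases hcase with h | h | h <;> rw [h] at hmain hD hI <;> omega


lemma tailCls_disj {k : ℕ} {c1 c2 : Vtx n} (h : c2 ∉ tailCls k c1) :
    Disjoint (tailCls k c1) (tailCls k c2) := by
  rw [Set.disjoint_left]
  intro a ha1 ha2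
  exact h (tailCls_trans ha1 (tailCls_symm ha2))

theorem Skey {n : ℕ} : ∀ (k : ℕ), 3 ≤ k → k ≤ n →
    ∀ (u0 : Vtx n) (U : Set (Vtx n)), U ⊆ tailCls k u0 → 2 ≤ U.ncard → U.ncard ≤ 4*k - 8 →
    2*k - 2 ≤ ((setNbhd (burntPancake n) U) ∩ tailCls k u0).ncard := by
  intro k hk3
  induction k, hk3 using Nat.le_induction with
  | base =>
    intro hkn u0 U hU h1 h2
    have := base3 hkn u0 U hU h1 (by omega)
    omega
  | succ k hk3 ih =>
    intro hkn u0 U hU hm2 hm4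
    have hkn' : k ≤ n := by omega
    have hk1 : 1 ≤ k := by omega
    have hnpos : 0 < n := by omega
    set G := burntPancake n with hG
    set B := setNbhd G U ∩ tailCls (k+1) u0 with hB
    suffices hsuf : 2*k ≤ B.ncard by omega
    -- class facts
    have hCeq : ∀ c ∈ U, tailCls (k+1) u0 = tailCls (k+1) c :=
      fun c hc => tailCls_eq_of_mem (hU hc)
    have hsubC : ∀ c ∈ U, tailCls k c ⊆ tailCls (k+1) u0 := by
      intro c hc v hv
      rw [hCeq c hc]
      exact tailCls_mono (by omega) c hv
    have hsubB : ∀ c ∈ U, setNbhd G U ∩ tailCls k c ⊆ B :=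
      fun c hc v hv => ⟨hv.1, hsubC c hc hv.2⟩
    have hdisj_add : ∀ X Y : Set (Vtx n), X ⊆ B → Y ⊆ B → Disjoint X Y →
        X.ncard + Y.ncard ≤ B.ncard := by
      intro X Y hX hY hXY
      calc X.ncard + Y.ncard = (X ∪ Y).ncard :=
        (Set.ncard_union_eq hXY (Set.toFinite _) (Set.toFinite _)).symm
      _ ≤ B.ncard := Set.ncard_le_ncard (Set.union_subset hX hY) (Set.toFinite _)
    -- L2
    have hbound_sub : ∀ c ∈ U, 2 ≤ (U ∩ tailCls k c).ncard → (U ∩ tailCls k c).ncard ≤ 4*k-8 →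
        2*k-2 ≤ (setNbhd G U ∩ tailCls k c).ncard := by
      intro c hc ht2 ht8
      have happ := ih hkn' c (U ∩ tailCls k c) Set.inter_subset_right ht2 ht8
      refine le_trans happ (Set.ncard_le_ncard ?_ (Set.toFinite _))
      rintro v ⟨⟨hvnot, u, hu, hadj⟩, hv2⟩
      refine ⟨⟨fun hvU => hvnot ⟨hvU, hv2⟩, u, hu.1, hadj⟩, hv2⟩
    -- L1
    have hsingle : ∀ c ∈ U, (U ∩ tailCls k c) = {c} →
        k ≤ (setNbhd G U ∩ tailCls k c).ncard := by
      intro c hc hsing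
      have himg : ((fun i : Fin n => prefixReversal i c) '' {i : Fin n | i.val < k})
          ⊆ setNbhd G U ∩ tailCls k c := by
        rintro v ⟨i, hi, rfl⟩
        have hmem : prefixReversal i c ∈ tailCls k c := (pr_mem_tailCls_iff hk1 i c).2 hi
        refine ⟨⟨?_, c, hc, adj_pr i c⟩, hmem⟩
        intro hvU
        have hin : prefixReversal i c ∈ U ∩ tailCls k c := ⟨hvU, hmem⟩
        rw [hsing] at hin
        exact pr_ne_self i c hin
      calc k = ((fun i : Fin n => prefixReversal i c) '' {i : Fin n | i.val < k}).ncard :=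
        (ncard_pr_image hkn' c).symm
      _ ≤ _ := Set.ncard_le_ncard himg (Set.toFinite _)
    -- L1+L2 combined : any nonempty subclass with small count gives ≥ k
    have hgen : ∀ c ∈ U, (U ∩ tailCls k c).ncard ≤ 4*k-8 →
        k ≤ (setNbhd G U ∩ tailCls k c).ncard := by
      intro c hc hle
      have hcmem : c ∈ U ∩ tailCls k c := ⟨hc, tailCls_self k c⟩
      have hpos : 1 ≤ (U ∩ tailCls k c).ncard :=
        (Set.ncard_pos (Set.toFinite _)).2 ⟨c, hcmem⟩
      rcases eq_or_lt_of_le hpos with h1 | h1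
      · obtain ⟨a, ha⟩ := Set.ncard_eq_one.1 h1.symm
        have hac : a = c := by
          have := hcmem
          rw [ha] at this
          exact (Set.mem_singleton_iff.1 this).symm
        exact hsingle c hc (by rw [ha, hac])
      · have := hbound_sub c hc (by omega) hle
        omega
    -- L3 (subset trick)
    have hsub_tr : ∀ c ∈ U, 4*k-8 ≤ (U ∩ tailCls k c).ncard →
        2*k-2 ≤ (setNbhd G U ∩ tailCls k c).ncard + ((U ∩ tailCls k c).ncard - (4*k-8)) := by
      intro c hc ht
      obtain ⟨W', hW'sub, hW'card⟩ := Set.exists_subset_card_eq ht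
      have happ := ih hkn' c W' (hW'sub.trans Set.inter_subset_right) (by omega) (by omega)
      have hincl : setNbhd G W' ∩ tailCls k c
          ⊆ (setNbhd G U ∩ tailCls k c) ∪ ((U ∩ tailCls k c) \ W') := by
        rintro v ⟨⟨hvn, u, hu, hadj⟩, hvc⟩
        by_cases hvU : v ∈ U
        · exact Or.inr ⟨⟨hvU, hvc⟩, hvn⟩
        · exact Or.inl ⟨⟨hvU, u, (hW'sub hu).1, hadj⟩, hvc⟩
      have hd := Set.ncard_diff hW'sub (Set.toFinite _)
      calc 2*k-2 ≤ (setNbhd G W' ∩ tailCls k c).ncard := happ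
      _ ≤ ((setNbhd G U ∩ tailCls k c) ∪ ((U ∩ tailCls k c) \ W')).ncard :=
          Set.ncard_le_ncard hincl (Set.toFinite _)
      _ ≤ (setNbhd G U ∩ tailCls k c).ncard + ((U ∩ tailCls k c) \ W').ncard :=
          Set.ncard_union_le _ _
      _ = (setNbhd G U ∩ tailCls k c).ncard + ((U ∩ tailCls k c).ncard - (4*k-8)) := by
          rw [hd, hW'card]
    -- cross machinery
    set ck : Fin n := ⟨k, by omega⟩ with hck
    have hcross_inv : Function.Involutive (prefixReversal ck (n := n)) := fun u => pr_pr ck u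
    have hcross_inj : Function.Injective (prefixReversal ck (n := n)) := hcross_inv.injective
    have hcrossC : ∀ u ∈ U, prefixReversal ck u ∈ tailCls (k+1) u0 := by
      intro u hu
      rw [hCeq u hu]
      exact (pr_mem_tailCls_iff (by omega) ck u).2 (by simp [hck])
    have hcross_not : ∀ c ∈ U, ∀ u, u ∈ U ∩ tailCls k c → prefixReversal ck u ∉ tailCls k c := by
      intro c hc u hu hmem
      rw [tailCls_eq_of_mem hu.2] at hmem
      have := (pr_mem_tailCls_iff hk1 ck u).1 hmem
      simp [hck] at this
    -- the cross set bound helper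
    have hAbound : ∀ c ∈ U, ∃ A : Set (Vtx n), A ⊆ B ∧ Disjoint A (tailCls k c) ∧
        (U ∩ tailCls k c).ncard ≤ A.ncard + (U \ tailCls k c).ncard := by
      intro c hc
      refine ⟨(prefixReversal ck '' (U ∩ tailCls k c)) \ U, ?_, ?_, ?_⟩
      · rintro a ⟨⟨u, hu, rfl⟩, hanU⟩
        exact ⟨⟨hanU, u, hu.1, adj_pr ck u⟩, hcrossC u hu.1⟩
      · rw [Set.disjoint_left]
        rintro a ⟨⟨u, hu, rfl⟩, -⟩ hac
        exact hcross_not c hc u hu hac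
      · have himgcard : (prefixReversal ck '' (U ∩ tailCls k c)).ncard
            = (U ∩ tailCls k c).ncard := Set.ncard_image_of_injective _ hcross_inj
        have hintsub : (prefixReversal ck '' (U ∩ tailCls k c)) ∩ U ⊆ U \ tailCls k c := by
          rintro a ⟨⟨u, hu, rfl⟩, haU⟩
          exact ⟨haU, hcross_not c hc u hu⟩
        have hdiff : (prefixReversal ck '' (U ∩ tailCls k c)) \ U
            = (prefixReversal ck '' (U ∩ tailCls k c))
              \ ((prefixReversal ck '' (U ∩ tailCls k c)) ∩ U) := Set.diff_self_inter.symm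
        have hd2 := Set.ncard_diff
          (Set.inter_subset_left :
            (prefixReversal ck '' (U ∩ tailCls k c)) ∩ U ⊆ prefixReversal ck '' (U ∩ tailCls k c))
          (Set.toFinite _)
        have hle2 : ((prefixReversal ck '' (U ∩ tailCls k c)) ∩ U).ncard
            ≤ (U \ tailCls k c).ncard := Set.ncard_le_ncard hintsub (Set.toFinite _)
        rw [hdiff, hd2, himgcard]
        omega
    -- case split
    by_cases hP : ∃ c ∈ U, 4*k - 7 ≤ (U ∩ tailCls k c).ncard
    · obtain ⟨c1, hc1U, ht1⟩ := hP
      have htr := Set.ncard_inter_add_ncard_diff_eq_ncard U (tailCls k c1) (Set.toFinite _)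
      have hC1 := hsub_tr c1 hc1U (by omega)
      obtain ⟨A, hAB, hAdisj, hAcard⟩ := hAbound c1 hc1U
      have hXA : Disjoint (setNbhd G U ∩ tailCls k c1) A := by
        rw [Set.disjoint_left]
        rintro x ⟨-, hx2⟩ hxA
        exact (Set.disjoint_left.1 hAdisj) hxA hx2
      have hplus1 : (setNbhd G U ∩ tailCls k c1).ncard + A.ncard ≤ B.ncard :=
        hdisj_add _ _ (hsubB c1 hc1U) hAB hXA
      by_cases hr0 : (U \ tailCls k c1).ncard = 0
      · omega
      · have hRne : (U \ tailCls k c1).Nonempty := Set.nonempty_of_ncard_ne_zero hr0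
        obtain ⟨c2, hc2U, hc2n⟩ := hRne
        have ht2sub : U ∩ tailCls k c2 ⊆ U \ tailCls k c1 := by
          rintro x ⟨hxU, hxc2⟩
          refine ⟨hxU, fun hxc1 => hc2n ?_⟩
          exact tailCls_trans hxc1 (tailCls_symm hxc2)
        have ht2r : (U ∩ tailCls k c2).ncard ≤ (U \ tailCls k c1).ncard :=
          Set.ncard_le_ncard ht2sub (Set.toFinite _)
        have hg2 : k ≤ (setNbhd G U ∩ tailCls k c2).ncard := by
          apply hgen c2 hc2U
          omega
        have hdisj12 : Disjoint (setNbhd G U ∩ tailCls k c1) (setNbhd G U ∩ tailCls k c2) := by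
          have := tailCls_disj (k := k) (c1 := c1) (c2 := c2) hc2n
          exact Set.disjoint_of_subset Set.inter_subset_right Set.inter_subset_right this
        have hplus2 : (setNbhd G U ∩ tailCls k c1).ncard
            + (setNbhd G U ∩ tailCls k c2).ncard ≤ B.ncard :=
          hdisj_add _ _ (hsubB c1 hc1U) (hsubB c2 hc2U) hdisj12
        omega
    · push_neg at hP
      have hUne : U.Nonempty := Set.nonempty_of_ncard_ne_zero (by omega)
      obtain ⟨c1, hc1U⟩ := hUne
      by_cases hone : U ⊆ tailCls k c1
      · have hT1 : U ∩ tailCls k c1 = U := Set.inter_eq_left.2 hone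
        have hP1 := hP c1 hc1U
        rw [hT1] at hP1
        have hX := hbound_sub c1 hc1U (by rw [hT1]; omega) (by rw [hT1]; omega)
        obtain ⟨A, hAB, hAdisj, hAcard⟩ := hAbound c1 hc1U
        have hr0 : (U \ tailCls k c1).ncard = 0 := by
          rw [Set.diff_eq_empty.2 hone, Set.ncard_empty]
        have hXA : Disjoint (setNbhd G U ∩ tailCls k c1) A := by
          rw [Set.disjoint_left]
          rintro x ⟨-, hx2⟩ hxA
          exact (Set.disjoint_left.1 hAdisj) hxA hx2
        have hplus1 : (setNbhd G U ∩ tailCls k c1).ncard + A.ncard ≤ B.ncard :=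
          hdisj_add _ _ (hsubB c1 hc1U) hAB hXA
        rw [hT1] at hAcard
        omega
      · rw [Set.not_subset] at hone
        obtain ⟨c2, hc2U, hc2n⟩ := hone
        have hg1 : k ≤ (setNbhd G U ∩ tailCls k c1).ncard := by
          apply hgen c1 hc1U
          have hle := hP c1 hc1U
          omega
        have hg2 : k ≤ (setNbhd G U ∩ tailCls k c2).ncard := by
          apply hgen c2 hc2U
          have hle := hP c2 hc2U
          omega
        have hdisj12 : Disjoint (setNbhd G U ∩ tailCls k c1) (setNbhd G U ∩ tailCls k c2) := by
          have := tailCls_disj (k := k) (c1 := c1) (c2 := c2) hc2n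
          exact Set.disjoint_of_subset Set.inter_subset_right Set.inter_subset_right this
        have hplus2 : (setNbhd G U ∩ tailCls k c1).ncard
            + (setNbhd G U ∩ tailCls k c2).ncard ≤ B.ncard :=
          hdisj_add _ _ (hsubB c1 hc1U) (hsubB c2 hc2U) hdisj12
        omega

end BP

/-- For the burnt pancake network `BP_n` with `n ≥ 3` and any
`U ⊆ V(BP_n)` with `2 ≤ |U| ≤ 4n − 8`, one has `|N_{BP_n}(U)| ≥ 2n − 2`. -/
theorem burntPancake_nbhd_bound (n : ℕ) (hn : 3 ≤ n)
    (U : Set (Equiv.Perm (Fin n) × (Fin n → Bool)))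
    (hU1 : 2 ≤ U.ncard) (hU2 : U.ncard ≤ 4 * n - 8) :
    2 * n - 2 ≤ (setNbhd (burntPancake n) U).ncard := by
  have hpos : 0 < n := by omega
  set u0 : BP.Vtx n := (1, fun _ => false) with hu0
  have huniv : BP.tailCls n u0 = Set.univ := by
    ext v
    simp only [Set.mem_univ, iff_true]
    intro j hj
    exact absurd hj (by omega : ¬ n ≤ j.val)
  have := BP.Skey n hn le_rfl u0 U (by rw [huniv]; exact Set.subset_univ U) hU1 hU2
  rwa [huniv, Set.inter_univ] at this
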